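/- Suppose f = F' exists in a neighborhood of ξ_α, satisfies a Lipschitz condition there, and f(ξ_α) > 0. Let k = [αN] + 1 and define the kernel density estimator f̂(ξ_α) = N^{-3/4} Σ_{i=1}^N 1{ 2N^{1/4} |X_i − X_{k:N}| ≤ 1 }. Then for every c > 0 there is a constant A > 0, not depending on N, such that P( |f̂(ξ_α) − f(ξ_α)| > A (log N)^{1/2} / N^{1/4} ) = O(N^{-c}) as N → ∞. -/

import Mathlib

open MeasureTheory ProbabilityTheory Filter Real Set

noncomputable section

/-- The `i`-th order statistic (1-indexed) of the sample `X 1, …, X N`. -/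
def orderStat {Ω : Type*} (X : ℕ → Ω → ℝ) (N i : ℕ) (ω : Ω) : ℝ :=
  ((List.ofFn fun j : Fin N => X (j + 1) ω).insertionSort (· ≤ ·)).getD (i - 1) 0

/-- Left-continuous inverse (quantile function) of a distribution function. -/
def quantile (F : ℝ → ℝ) (u : ℝ) : ℝ := sInf {x | u ≤ F x}

/-- The trimmed mean `([bN] − [aN])⁻¹ Σ_{i=[aN]+1}^{[bN]} X_{i:N}`. -/
def trimmedMean (a b : ℝ) {Ω : Type*} (X : ℕ → Ω → ℝ) (N : ℕ) (ω : Ω) : ℝ :=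
  (1 / ((⌊b * (N : ℝ)⌋ : ℝ) - (⌊a * (N : ℝ)⌋ : ℝ))) *
    ∑ i ∈ Finset.Icc ((⌊a * (N : ℝ)⌋).toNat + 1) (⌊b * (N : ℝ)⌋).toNat, orderStat X N i ω

/-- The `N^{-1/2}`-normalized trimmed sum `N^{-1/2} Σ_{i=[aN]+1}^{[bN]} X_{i:N}`. -/
def trimmedSum (a b : ℝ) {Ω : Type*} (X : ℕ → Ω → ℝ) (N : ℕ) (ω : Ω) : ℝ :=
  (N : ℝ) ^ (-(1/2 : ℝ)) *
    ∑ i ∈ Finset.Icc ((⌊a * (N : ℝ)⌋).toNat + 1) (⌊b * (N : ℝ)⌋).toNat, orderStat X N i ω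

/-- The Winsorized quantile function `Q`. -/
def Qwin (F : ℝ → ℝ) (a b u : ℝ) : ℝ :=
  if u ≤ a then quantile F a else if u ≤ b then quantile F u else quantile F b

def muW (F : ℝ → ℝ) (a b : ℝ) : ℝ := ∫ u in (0:ℝ)..1, Qwin F a b u

def sigmaW2 (F : ℝ → ℝ) (a b : ℝ) : ℝ := ∫ u in (0:ℝ)..1, (Qwin F a b u - muW F a b) ^ 2

def gamma3W (F : ℝ → ℝ) (a b : ℝ) : ℝ := ∫ u in (0:ℝ)..1, (Qwin F a b u - muW F a b) ^ 3

/-- The population trimmed mean `μ(a,b)`. -/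
def muAB (F : ℝ → ℝ) (a b : ℝ) : ℝ := (b - a)⁻¹ * ∫ u in a..b, quantile F u

/-- Standard normal density. -/
def stdGaussPDF (x : ℝ) : ℝ := (Real.sqrt (2 * π))⁻¹ * Real.exp (-x ^ 2 / 2)

/-- Standard normal distribution function. -/
def stdGaussCDF (x : ℝ) : ℝ := ∫ t in Set.Iic x, stdGaussPDF t

def lambda1 (F : ℝ → ℝ) (a b : ℝ) : ℝ := gamma3W F a b / Real.sqrt (sigmaW2 F a b) ^ 3

def delta2W (F f : ℝ → ℝ) (a b : ℝ) : ℝ :=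
  -(a ^ 2) * (muW F a b - quantile F a) ^ 2 / f (quantile F a) +
    (1 - b) ^ 2 * (muW F a b - quantile F b) ^ 2 / f (quantile F b)

def lambda2 (F f : ℝ → ℝ) (a b : ℝ) : ℝ := delta2W F f a b / Real.sqrt (sigmaW2 F a b) ^ 3

/-- The bias term `β_N`. -/
def betaN (F f : ℝ → ℝ) (a b : ℝ) (N : ℕ) : ℝ :=
  (1 / (N : ℝ)) *
    (-(a * N - (⌊a * (N : ℝ)⌋ : ℝ)) * (muAB F a b - quantile F a)
      - a * (1 - a) / (2 * f (quantile F a))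
      + (b * N - (⌊b * (N : ℝ)⌋ : ℝ)) * (muAB F a b - quantile F b)
      + b * (1 - b) / (2 * f (quantile F b)))

/-- The one-term Edgeworth expansion `G_N` for the normalized trimmed mean. -/
def GN (F f : ℝ → ℝ) (a b : ℝ) (N : ℕ) (x : ℝ) : ℝ :=
  stdGaussCDF x - stdGaussPDF x / (6 * Real.sqrt (N : ℝ)) *
    ((lambda1 F a b + 3 * lambda2 F f a b) * (x ^ 2 - 1) +
      6 * N * betaN F f a b N / Real.sqrt (sigmaW2 F a b))

/-- The one-term Edgeworth expansion `H_N` for the Studentized trimmed mean. -/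
def HN (F f : ℝ → ℝ) (a b : ℝ) (N : ℕ) (x : ℝ) : ℝ :=
  stdGaussCDF x + stdGaussPDF x / (6 * Real.sqrt (N : ℝ)) *
    ((2 * x ^ 2 + 1) * lambda1 F a b + 3 * (x ^ 2 + 1) * lambda2 F f a b -
      6 * N * betaN F f a b N / Real.sqrt (sigmaW2 F a b))

/-- Plug-in estimator `μ̂_W` of the Winsorized mean. -/
def hatMuW (a b : ℝ) {Ω : Type*} (X : ℕ → Ω → ℝ) (N : ℕ) (ω : Ω) : ℝ :=
  ((⌊a * (N : ℝ)⌋).toNat + 1 : ℝ) / N * orderStat X N ((⌊a * (N : ℝ)⌋).toNat + 1) ω +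
    (1 / (N : ℝ)) * ∑ i ∈ Finset.Icc ((⌊a * (N : ℝ)⌋).toNat + 2) ((⌊b * (N : ℝ)⌋).toNat - 1),
      orderStat X N i ω +
    ((N : ℝ) - ((⌊b * (N : ℝ)⌋).toNat : ℝ) + 1) / N * orderStat X N (⌊b * (N : ℝ)⌋).toNat ω

/-- Plug-in estimator `S_N²` of the Winsorized variance. -/
def SN2 (a b : ℝ) {Ω : Type*} (X : ℕ → Ω → ℝ) (N : ℕ) (ω : Ω) : ℝ :=
  ((⌊a * (N : ℝ)⌋).toNat + 1 : ℝ) / N * orderStat X N ((⌊a * (N : ℝ)⌋).toNat + 1) ω ^ 2 +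
    (1 / (N : ℝ)) * ∑ i ∈ Finset.Icc ((⌊a * (N : ℝ)⌋).toNat + 2) ((⌊b * (N : ℝ)⌋).toNat - 1),
      orderStat X N i ω ^ 2 +
    ((N : ℝ) - ((⌊b * (N : ℝ)⌋).toNat : ℝ) + 1) / N * orderStat X N (⌊b * (N : ℝ)⌋).toNat ω ^ 2 -
    hatMuW a b X N ω ^ 2

/-- Plug-in estimator of the `r`-th Winsorized moment. -/
def hatMuRW (r : ℕ) (a b : ℝ) {Ω : Type*} (X : ℕ → Ω → ℝ) (N : ℕ) (ω : Ω) : ℝ :=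
  ((⌊a * (N : ℝ)⌋).toNat + 1 : ℝ) / N * orderStat X N ((⌊a * (N : ℝ)⌋).toNat + 1) ω ^ r +
    (1 / (N : ℝ)) * ∑ i ∈ Finset.Icc ((⌊a * (N : ℝ)⌋).toNat + 2) ((⌊b * (N : ℝ)⌋).toNat - 1),
      orderStat X N i ω ^ r +
    ((N : ℝ) - ((⌊b * (N : ℝ)⌋).toNat : ℝ) + 1) / N * orderStat X N (⌊b * (N : ℝ)⌋).toNat ω ^ r

/-- `#{i ∈ {1,…,N} : X i ω ≤ ξ}`. -/
def countLE {Ω : Type*} (X : ℕ → Ω → ℝ) (N : ℕ) (ξ : ℝ) (ω : Ω) : ℕ :=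
  ((Finset.Icc 1 N).filter fun i => X i ω ≤ ξ).card

/-- Signed-sum convention `Σ_{i=k}^m a_i = sign(m−k) Σ_{i=k∧m}^{k∨m} a_i` (with `sign 0 = 0`). -/
def signedSum (k m : ℕ) (g : ℕ → ℝ) : ℝ :=
  (if k < m then 1 else if m < k then -1 else 0) *
    ∑ i ∈ Finset.Icc (min k m) (max k m), g i

/-- `x` Winsorized outside `(ξa, ξb]`. -/
def winsor (ξa ξb x : ℝ) : ℝ := if x ≤ ξa then ξa else if x ≤ ξb then x else ξb

def indLE (ξ x : ℝ) : ℝ := if x ≤ ξ then 1 else 0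

/-- `μ_W = E W_1`. -/
def winsorMean {Ω : Type*} [MeasurableSpace Ω] (P : Measure Ω) (X : ℕ → Ω → ℝ)
    (ξa ξb : ℝ) : ℝ := ∫ ω, winsor ξa ξb (X 1 ω) ∂P

/-- `σ_W² = Var W_1`. -/
def winsorVar {Ω : Type*} [MeasurableSpace Ω] (P : Measure Ω) (X : ℕ → Ω → ℝ)
    (ξa ξb : ℝ) : ℝ := ∫ ω, (winsor ξa ξb (X 1 ω) - winsorMean P X ξa ξb) ^ 2 ∂P

/-- `γ_{3,W} = E (W_1 − μ_W)³`. -/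
def winsorThird {Ω : Type*} [MeasurableSpace Ω] (P : Measure Ω) (X : ℕ → Ω → ℝ)
    (ξa ξb : ℝ) : ℝ := ∫ ω, (winsor ξa ξb (X 1 ω) - winsorMean P X ξa ξb) ^ 3 ∂P

/-- `L_{N,i} = N^{-1/2}(W_i − μ_W)`. -/
def LNi {Ω : Type*} [MeasurableSpace Ω] (P : Measure Ω) (X : ℕ → Ω → ℝ)
    (ξa ξb : ℝ) (N i : ℕ) (ω : Ω) : ℝ :=
  (N : ℝ) ^ (-(1/2 : ℝ)) * (winsor ξa ξb (X i ω) - winsorMean P X ξa ξb)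

/-- `L_N = Σ_{i=1}^N L_{N,i}`. -/
def LNsum {Ω : Type*} [MeasurableSpace Ω] (P : Measure Ω) (X : ℕ → Ω → ℝ)
    (ξa ξb : ℝ) (N : ℕ) (ω : Ω) : ℝ :=
  ∑ i ∈ Finset.Icc 1 N, LNi P X ξa ξb N i ω

/-- `U_{N,(i,j)}`. -/
def UNij (f : ℝ → ℝ) (a b ξa ξb : ℝ) {Ω : Type*} (X : ℕ → Ω → ℝ)
    (N i j : ℕ) (ω : Ω) : ℝ :=
  (N : ℝ) ^ (-(3/2 : ℝ)) *
    (-((indLE ξa (X i ω) - a) * (indLE ξa (X j ω) - a)) / f ξa +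
      (indLE ξb (X i ω) - b) * (indLE ξb (X j ω) - b) / f ξb)

/-- `U_N = Σ_{1 ≤ i < j ≤ N} U_{N,(i,j)}`. -/
def UNsum (f : ℝ → ℝ) (a b ξa ξb : ℝ) {Ω : Type*} (X : ℕ → Ω → ℝ)
    (N : ℕ) (ω : Ω) : ℝ :=
  ∑ i ∈ Finset.Icc 1 N, ∑ j ∈ Finset.Icc (i + 1) N, UNij f a b ξa ξb X N i j ω

/-- `V_{N,1}`. -/
def VN1 {Ω : Type*} [MeasurableSpace Ω] (P : Measure Ω) (f : ℝ → ℝ) (a b ξa ξb : ℝ)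
    (X : ℕ → Ω → ℝ) (N : ℕ) (ω : Ω) : ℝ :=
  2 * a * (((countLE X N ξa ω : ℝ) - a * N) / N) * (winsorMean P X ξa ξb - ξa) / f ξa +
    2 * (1 - b) * (((countLE X N ξb ω : ℝ) - b * N) / N) * (winsorMean P X ξa ξb - ξb) / f ξb

/-- `V_{N,2}`. -/
def VN2 {Ω : Type*} [MeasurableSpace Ω] (P : Measure Ω) (ξa ξb : ℝ)
    (X : ℕ → Ω → ℝ) (N : ℕ) (ω : Ω) : ℝ :=
  (1 / (N : ℝ)) * ∑ i ∈ Finset.Icc 1 N,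
    ((winsor ξa ξb (X i ω) - winsorMean P X ξa ξb) ^ 2 - winsorVar P X ξa ξb)

/-- Kernel density estimator with bandwidth `N^{-1/4}`, centred at the `r`-th order statistic. -/
def fhatAt {Ω : Type*} (X : ℕ → Ω → ℝ) (N r : ℕ) (ω : Ω) : ℝ :=
  (N : ℝ) ^ (-(3/4 : ℝ)) * ∑ i ∈ Finset.Icc 1 N,
    if 2 * (N : ℝ) ^ ((1:ℝ)/4) * |X i ω - orderStat X N r ω| ≤ 1 then (1:ℝ) else 0

/-- Kernel density estimate `f̂(ξ_α)` (centred at `X_{[aN]+1:N}`). -/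
def fhatA (a : ℝ) {Ω : Type*} (X : ℕ → Ω → ℝ) (N : ℕ) (ω : Ω) : ℝ :=
  fhatAt X N ((⌊a * (N : ℝ)⌋).toNat + 1) ω

/-- Kernel density estimate `f̂(ξ_β)` (centred at `X_{[bN]:N}`). -/
def fhatB (b : ℝ) {Ω : Type*} (X : ℕ → Ω → ℝ) (N : ℕ) (ω : Ω) : ℝ :=
  fhatAt X N (⌊b * (N : ℝ)⌋).toNat ω

/-- Estimator `λ̂₁`. -/
def hatLambda1 (a b : ℝ) {Ω : Type*} (X : ℕ → Ω → ℝ) (N : ℕ) (ω : Ω) : ℝ :=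
  (((⌊a * (N : ℝ)⌋).toNat + 1 : ℝ) / N *
      (orderStat X N ((⌊a * (N : ℝ)⌋).toNat + 1) ω - hatMuW a b X N ω) ^ 3 +
    (1 / (N : ℝ)) * ∑ i ∈ Finset.Icc ((⌊a * (N : ℝ)⌋).toNat + 2) ((⌊b * (N : ℝ)⌋).toNat - 1),
      (orderStat X N i ω - hatMuW a b X N ω) ^ 3 +
    ((N : ℝ) - ((⌊b * (N : ℝ)⌋).toNat : ℝ) + 1) / N *
      (orderStat X N (⌊b * (N : ℝ)⌋).toNat ω - hatMuW a b X N ω) ^ 3) /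
    Real.sqrt (SN2 a b X N ω) ^ 3

/-- Estimator `λ̂₂`. -/
def hatLambda2 (a b : ℝ) {Ω : Type*} (X : ℕ → Ω → ℝ) (N : ℕ) (ω : Ω) : ℝ :=
  (-(a ^ 2) * (hatMuW a b X N ω - orderStat X N ((⌊a * (N : ℝ)⌋).toNat + 1) ω) ^ 2 /
      fhatA a X N ω +
    (1 - b) ^ 2 * (hatMuW a b X N ω - orderStat X N (⌊b * (N : ℝ)⌋).toNat ω) ^ 2 /
      fhatB b X N ω) / Real.sqrt (SN2 a b X N ω) ^ 3

/-- Estimator `β̂_N`. -/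
def hatBetaN (a b : ℝ) {Ω : Type*} (X : ℕ → Ω → ℝ) (N : ℕ) (ω : Ω) : ℝ :=
  (1 / (N : ℝ)) *
    (-(a * N - (⌊a * (N : ℝ)⌋ : ℝ)) *
        (trimmedMean a b X N ω - orderStat X N ((⌊a * (N : ℝ)⌋).toNat + 1) ω)
      - a * (1 - a) / (2 * fhatA a X N ω)
      + (b * N - (⌊b * (N : ℝ)⌋ : ℝ)) *
        (trimmedMean a b X N ω - orderStat X N (⌊b * (N : ℝ)⌋).toNat ω)
      + b * (1 - b) / (2 * fhatB b X N ω))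

/-- Empirical Edgeworth expansion `Ĝ_N`. -/
def hatGN (a b : ℝ) {Ω : Type*} (X : ℕ → Ω → ℝ) (N : ℕ) (ω : Ω) (x : ℝ) : ℝ :=
  stdGaussCDF x - stdGaussPDF x / (6 * Real.sqrt (N : ℝ)) *
    ((hatLambda1 a b X N ω + 3 * hatLambda2 a b X N ω) * (x ^ 2 - 1) +
      6 * N * hatBetaN a b X N ω / Real.sqrt (SN2 a b X N ω))

/-- Empirical Edgeworth expansion `Ĥ_N`. -/
def hatHN (a b : ℝ) {Ω : Type*} (X : ℕ → Ω → ℝ) (N : ℕ) (ω : Ω) (x : ℝ) : ℝ :=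
  stdGaussCDF x + stdGaussPDF x / (6 * Real.sqrt (N : ℝ)) *
    ((2 * x ^ 2 + 1) * hatLambda1 a b X N ω + 3 * (x ^ 2 + 1) * hatLambda2 a b X N ω -
      6 * N * hatBetaN a b X N ω / Real.sqrt (SN2 a b X N ω))

/-- Iterated integral `∫_t^{u 1} ∫_{x₁}^{u 2} ⋯ ∫_{x_{k-1}}^{u k} dx_k ⋯ dx_1`. -/
def nestInt : ℕ → (ℕ → ℝ) → ℝ → ℝ
  | 0, _, _ => 1
  | (k + 1), u, t => ∫ x in t..(u 1), nestInt k (fun j => u (j + 1)) x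


lemma sorted_getD_le_iff {l : List ℝ} (hs : l.Pairwise (· ≤ ·)) {i : ℕ} (hi : i < l.length) (t : ℝ) :
    l.getD i 0 ≤ t ↔ i < l.countP (fun x => decide (x ≤ t)) := by
  rw [List.getD_eq_getElem l 0 hi]
  have hpair := List.pairwise_iff_getElem.1 hs
  constructor
  · intro h
    have h1 : (l.take (i+1)).countP (fun x => decide (x ≤ t)) = i + 1 := by
      rw [List.countP_eq_length.2, List.length_take, min_eq_left hi]
      intro x hx
      obtain ⟨j, hj, rfl⟩ := List.mem_iff_getElem.1 hx
      have hj1 : j < i + 1 := lt_of_lt_of_le hj (by rw [List.length_take]; exact min_le_left _ _)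
      have hjl : j < l.length := lt_of_lt_of_le hj (by rw [List.length_take]; exact min_le_right _ _)
      rw [List.getElem_take]
      have hle : l[j]'hjl ≤ l[i]'hi := by
        rcases eq_or_lt_of_le (Nat.le_of_lt_succ hj1) with h' | h'
        · subst h'; exact le_refl _
        · exact hpair j i hjl hi h'
      exact decide_eq_true (le_trans hle h)
    calc i < i + 1 := Nat.lt_succ_self i
    _ = (l.take (i+1)).countP _ := h1.symm
    _ ≤ l.countP (fun x => decide (x ≤ t)) := by
        conv_rhs => rw [← List.take_append_drop (i+1) l]
        rw [List.countP_append]; exact Nat.le_add_right _ _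
  · intro h
    by_contra hlt
    push_neg at hlt
    have h0 : (l.drop i).countP (fun x => decide (x ≤ t)) = 0 := by
      rw [List.countP_eq_zero]
      intro x hx
      obtain ⟨j, hj, rfl⟩ := List.mem_iff_getElem.1 hx
      have hjl : i + j < l.length := by
        have := hj; rw [List.length_drop] at this; omega
      rw [List.getElem_drop]
      have hle : l[i]'hi ≤ l[(i+j)]'hjl := by
        rcases Nat.eq_zero_or_pos j with rfl | hj'
        · simp
        · exact hpair i (i+j) hi hjl (by omega)
      simp only [decide_eq_true_eq]
      push_neg
      exact lt_of_lt_of_le hlt hle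
    have : l.countP (fun x => decide (x ≤ t)) ≤ i := by
      conv_lhs => rw [← List.take_append_drop i l]
      rw [List.countP_append, h0, Nat.add_zero]
      exact le_trans List.countP_le_length (by simp)
    omega

lemma ofFn_countP (N : ℕ) (f : ℕ → ℝ) (q : ℝ → Bool) :
    (List.ofFn fun j : Fin N => f (j + 1)).countP q
      = ((Finset.Icc 1 N).filter fun i => q (f i)).card := by
  induction N with
  | zero => simp
  | succ N ih =>
    have h1 : Finset.Icc 1 (N+1) = insert (N+1) (Finset.Icc 1 N) := by
      ext x; simp [Finset.mem_Icc]; omega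
    rw [h1, Finset.filter_insert]
    have h2 : (List.ofFn fun j : Fin (N+1) => f (j + 1))
        = (List.ofFn fun j : Fin N => f (j + 1)).concat (f (N + 1)) := by
      rw [List.ofFn_succ']
      simp [Fin.castSucc, List.concat_eq_append]
    rw [h2, List.concat_eq_append, List.countP_append, ih]
    by_cases hq : q (f (N+1))
    · rw [if_pos hq, Finset.card_insert_of_notMem (by simp), List.countP_cons_of_pos hq]
      simp
    · rw [if_neg hq, List.countP_cons_of_neg hq]; simp

lemma countLE_eq_countP {Ω : Type*} (X : ℕ → Ω → ℝ) (N : ℕ) (t : ℝ) (ω : Ω) :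
    countLE X N t ω = (List.ofFn fun j : Fin N => X (j + 1) ω).countP (fun x => decide (x ≤ t)) := by
  rw [countLE, ofFn_countP N (fun i => X i ω)]
  congr 1
  exact Finset.filter_congr fun i _ => by simp

lemma orderStat_le_iff {Ω : Type*} (X : ℕ → Ω → ℝ) {N k : ℕ} (hk1 : 1 ≤ k) (hkN : k ≤ N)
    (ω : Ω) (t : ℝ) :
    orderStat X N k ω ≤ t ↔ k ≤ countLE X N t ω := by
  have hlen : ((List.ofFn fun j : Fin N => X (j + 1) ω).insertionSort (· ≤ ·)).length = N := by
    simp [List.length_insertionSort]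
  have hs : ((List.ofFn fun j : Fin N => X (j + 1) ω).insertionSort (· ≤ ·)).Pairwise (· ≤ ·) :=
    List.pairwise_insertionSort _ _
  have hi : k - 1 < ((List.ofFn fun j : Fin N => X (j + 1) ω).insertionSort (· ≤ ·)).length := by
    rw [hlen]; omega
  rw [orderStat, sorted_getD_le_iff hs hi t,
    (List.perm_insertionSort (· ≤ ·) _).countP_eq, ← countLE_eq_countP]
  omega

lemma countLE_eq_sum {Ω : Type*} (X : ℕ → Ω → ℝ) (N : ℕ) (t : ℝ) (ω : Ω) :
    (countLE X N t ω : ℝ) = ∑ i ∈ Finset.Icc 1 N, indLE t (X i ω) := by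
  rw [countLE, Finset.card_filter]
  push_cast
  exact Finset.sum_congr rfl fun i _ => by simp [indLE]

lemma countLE_mono {Ω : Type*} (X : ℕ → Ω → ℝ) (N : ℕ) {s t : ℝ} (h : s ≤ t) (ω : Ω) :
    countLE X N s ω ≤ countLE X N t ω :=
  Finset.card_le_card (Finset.monotone_filter_right _ (fun i _ hi => le_trans hi h))

lemma chernoff_aux {Ω : Type*} [MeasurableSpace Ω] {P : Measure Ω} [IsProbabilityMeasure P]
    {Y : ℕ → Ω → ℝ} (hmeas : ∀ i, Measurable (Y i))
    (hindep : iIndepFun Y P)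
    (hb : ∀ i ω, Y i ω = 0 ∨ Y i ω = 1) {p : ℝ}
    (hp : ∀ i, ∫ ω, Y i ω ∂P = p) (N : ℕ) {lam : ℝ} (hl0 : 0 ≤ lam) (hl2 : lam ≤ 2) :
    (P {ω | (N : ℝ) * p + N * lam ≤ ∑ i ∈ Finset.Icc 1 N, Y i ω}).toReal ≤
      Real.exp (-(N : ℝ) * lam ^ 2 / 4) := by
  set t : ℝ := lam / 2 with ht_def
  have ht0 : 0 ≤ t := by positivity
  have ht1 : t ≤ 1 := by rw [ht_def]; linarith
  have hY01 : ∀ i ω, 0 ≤ Y i ω ∧ Y i ω ≤ 1 := by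
    intro i ω; rcases hb i ω with h | h <;> rw [h] <;> norm_num
  -- p ∈ [0,1]
  have hYint : ∀ i, Integrable (Y i) P := by
    intro i
    refine ⟨(hmeas i).aestronglyMeasurable, ?_⟩
    apply MeasureTheory.HasFiniteIntegral.of_bounded (C := 1)
    filter_upwards with ω
    rw [Real.norm_eq_abs, abs_le]
    exact ⟨by linarith [(hY01 i ω).1], (hY01 i ω).2⟩
  have hp0 : 0 ≤ p := by
    rw [← hp 1]; exact integral_nonneg fun ω => (hY01 1 ω).1
  have hp1 : p ≤ 1 := by
    rw [← hp 1]
    calc ∫ ω, Y 1 ω ∂P ≤ ∫ _, (1 : ℝ) ∂P :=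
          integral_mono (hYint 1) (integrable_const 1) fun ω => (hY01 1 ω).2
    _ = 1 := by simp
  -- sum as function
  have hsum_eq : ∀ ω, (∑ i ∈ Finset.Icc 1 N, Y i) ω = ∑ i ∈ Finset.Icc 1 N, Y i ω := by
    intro ω; simp [Finset.sum_apply]
  have hSmeas : Measurable (∑ i ∈ Finset.Icc 1 N, Y i) := by
    rw [show (∑ i ∈ Finset.Icc 1 N, Y i) = fun a => ∑ i ∈ Finset.Icc 1 N, Y i a from
      funext hsum_eq]
    exact Finset.measurable_sum _ fun i _ => hmeas i
  have hSbd : ∀ ω, 0 ≤ (∑ i ∈ Finset.Icc 1 N, Y i) ω ∧ (∑ i ∈ Finset.Icc 1 N, Y i) ω ≤ N := by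
    intro ω
    rw [hsum_eq]
    constructor
    · exact Finset.sum_nonneg fun i _ => (hY01 i ω).1
    · calc ∑ i ∈ Finset.Icc 1 N, Y i ω ≤ ∑ _i ∈ Finset.Icc 1 N, (1:ℝ) :=
            Finset.sum_le_sum fun i _ => (hY01 i ω).2
      _ = N := by simp [Nat.card_Icc]
  have hint : Integrable (fun ω => Real.exp (t * (∑ i ∈ Finset.Icc 1 N, Y i) ω)) P := by
    refine ⟨((hSmeas.const_mul t).exp).aestronglyMeasurable, ?_⟩
    apply MeasureTheory.HasFiniteIntegral.of_bounded (C := Real.exp (t * N))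
    filter_upwards with ω
    rw [Real.norm_eq_abs, abs_of_pos (Real.exp_pos _), Real.exp_le_exp]
    exact mul_le_mul_of_nonneg_left (hSbd ω).2 ht0
  have hchern := measure_ge_le_exp_mul_mgf (X := ∑ i ∈ Finset.Icc 1 N, Y i) (μ := P)
    ((N : ℝ) * p + N * lam) ht0 hint
  have hmgfsum := hindep.mgf_sum (t := t) hmeas (Finset.Icc 1 N)
  -- mgf of each indicator
  have hmgf_each : ∀ i, mgf (Y i) P t = 1 + p * (Real.exp t - 1) := by
    intro i
    have hptwise : ∀ ω, Real.exp (t * Y i ω) = 1 + (Real.exp t - 1) * Y i ω := by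
      intro ω; rcases hb i ω with h | h <;> rw [h] <;> simp
    rw [mgf]
    calc ∫ ω, Real.exp (t * Y i ω) ∂P = ∫ ω, (1 + (Real.exp t - 1) * Y i ω) ∂P :=
          integral_congr_ae (Filter.Eventually.of_forall hptwise)
    _ = 1 + p * (Real.exp t - 1) := by
        rw [integral_add (integrable_const 1) ((hYint i).const_mul _), integral_const,
          integral_const_mul, hp i]
        simp [mul_comm]
    _ = 1 + p * (Real.exp t - 1) := rfl
  have hexp_t : Real.exp t ≤ 1 + t + t ^ 2 := by
    have hb2 := Real.exp_bound (x := t) (by rw [abs_of_nonneg ht0]; exact ht1) (n := 2) (by norm_num)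
    have : |Real.exp t - (1 + t)| ≤ t ^ 2 := by
      have h2 : ∑ i ∈ Finset.range 2, t ^ i / (Nat.factorial i) = 1 + t := by
        simp [Finset.sum_range_succ]
      rw [h2] at hb2
      calc |Real.exp t - (1 + t)| ≤ |t| ^ 2 * ((2:ℕ).succ / ((Nat.factorial 2) * 2)) := hb2
      _ ≤ t ^ 2 := by
          rw [abs_of_nonneg ht0]
          norm_num [Nat.factorial]
          nlinarith [sq_nonneg t]
    have := abs_le.1 this
    linarith [this.1, this.2]
  -- combine
  have hmgf_le : mgf (∑ i ∈ Finset.Icc 1 N, Y i) P t ≤ Real.exp ((N : ℝ) * p * (Real.exp t - 1)) := by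
    rw [hmgfsum]
    have h1 : ∀ i ∈ Finset.Icc 1 N, mgf (Y i) P t = 1 + p * (Real.exp t - 1) :=
      fun i _ => hmgf_each i
    rw [Finset.prod_congr rfl h1, Finset.prod_const, Nat.card_Icc, Nat.add_sub_cancel]
    have hbase : 0 ≤ 1 + p * (Real.exp t - 1) := by
      have : 1 ≤ Real.exp t := by rw [← Real.exp_zero]; exact Real.exp_le_exp.2 ht0
      nlinarith
    calc (1 + p * (Real.exp t - 1)) ^ N ≤ (Real.exp (p * (Real.exp t - 1))) ^ N := by
          apply pow_le_pow_left₀ hbase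
          linarith [Real.add_one_le_exp (p * (Real.exp t - 1))]
    _ = Real.exp ((N : ℝ) * p * (Real.exp t - 1)) := by
        rw [← Real.exp_nat_mul]
        congr 1
        ring
  have hset : {ω | (N : ℝ) * p + N * lam ≤ ∑ i ∈ Finset.Icc 1 N, Y i ω}
      = {ω | (N : ℝ) * p + N * lam ≤ (∑ i ∈ Finset.Icc 1 N, Y i) ω} := by
    ext ω; simp only [Set.mem_setOf_eq, hsum_eq]
  rw [hset]
  calc (P {ω | (N : ℝ) * p + N * lam ≤ (∑ i ∈ Finset.Icc 1 N, Y i) ω}).toReal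
      ≤ Real.exp (-t * ((N : ℝ) * p + N * lam)) * mgf (∑ i ∈ Finset.Icc 1 N, Y i) P t := hchern
  _ ≤ Real.exp (-t * ((N : ℝ) * p + N * lam)) * Real.exp ((N : ℝ) * p * (Real.exp t - 1)) := by
      exact mul_le_mul_of_nonneg_left hmgf_le (le_of_lt (Real.exp_pos _))
  _ = Real.exp (-t * ((N : ℝ) * p + N * lam) + (N : ℝ) * p * (Real.exp t - 1)) := by
      rw [← Real.exp_add]
  _ ≤ Real.exp (-(N : ℝ) * lam ^ 2 / 4) := by
      rw [Real.exp_le_exp]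
      have hN0 : (0 : ℝ) ≤ N := Nat.cast_nonneg N
      have key : (N:ℝ) * p * (Real.exp t - 1) ≤ (N:ℝ) * p * (t + t^2) := by
        apply mul_le_mul_of_nonneg_left (by linarith) (by positivity)
      have h1 : -t * ((N:ℝ) * p + N * lam) + (N:ℝ) * p * (Real.exp t - 1) ≤
          (N:ℝ) * p * t ^ 2 - t * (N:ℝ) * lam := by nlinarith [key]
      have h2 : (N:ℝ) * p * t ^ 2 - t * (N:ℝ) * lam ≤ -(N:ℝ) * lam ^ 2 / 4 := by
        rw [ht_def]
        nlinarith [mul_nonneg (mul_nonneg hN0 (sub_nonneg.2 hp1)) (sq_nonneg lam)]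
      linarith [h1, h2]
  -- adjust set equality

lemma tail_bound {Ω : Type*} [MeasurableSpace Ω] {P : Measure Ω} [IsProbabilityMeasure P]
    {X : ℕ → Ω → ℝ} (hmeas : ∀ i, Measurable (X i))
    (hindep : iIndepFun X P)
    (hident : ∀ i, IdentDistrib (X i) (X 1) P P)
    {F : ℝ → ℝ} (hF : ∀ x, F x = (P {ω | X 1 ω ≤ x}).toReal)
    (t : ℝ) (N : ℕ) {lam : ℝ} (hl0 : 0 ≤ lam) (hl2 : lam ≤ 2) :
    (P {ω | (N : ℝ) * F t + N * lam ≤ (countLE X N t ω : ℝ)}).toReal ≤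
        Real.exp (-(N : ℝ) * lam ^ 2 / 4) ∧
      (P {ω | (countLE X N t ω : ℝ) ≤ (N : ℝ) * F t - N * lam}).toReal ≤
        Real.exp (-(N : ℝ) * lam ^ 2 / 4) := by
  have hgmeas : Measurable (indLE t) := by
    unfold indLE
    exact Measurable.ite measurableSet_Iic measurable_const measurable_const
  have hYmeas : ∀ i, Measurable (fun ω => indLE t (X i ω)) := fun i => hgmeas.comp (hmeas i)
  have hYindep : iIndepFun (fun i => (indLE t) ∘ (X i)) P :=
    hindep.comp (fun _ => indLE t) (fun _ => hgmeas)
  have hb : ∀ (i : ℕ) (ω : Ω), indLE t (X i ω) = 0 ∨ indLE t (X i ω) = 1 := by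
    intro i ω; unfold indLE; split <;> simp
  have hint1 : ∀ i, ∫ ω, indLE t (X i ω) ∂P = F t := by
    intro i
    have hid : IdentDistrib (fun ω => indLE t (X i ω)) (fun ω => indLE t (X 1 ω)) P P :=
      (hident i).comp hgmeas
    rw [hid.integral_eq]
    have heq : ∀ ω, indLE t (X 1 ω) = ({ω | X 1 ω ≤ t}).indicator (fun _ => (1:ℝ)) ω := by
      intro ω
      by_cases h : X 1 ω ≤ t <;> simp [indLE, h, Set.indicator_apply]
    rw [integral_congr_ae (Filter.Eventually.of_forall heq),
      integral_indicator_const (1:ℝ) (by exact (hmeas 1) measurableSet_Iic), hF t]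
    simp [measureReal_def]
  constructor
  · have := chernoff_aux hYmeas hYindep hb hint1 N hl0 hl2
    have hset : {ω | (N : ℝ) * F t + N * lam ≤ (countLE X N t ω : ℝ)}
        = {ω | (N : ℝ) * F t + N * lam ≤ ∑ i ∈ Finset.Icc 1 N, ((indLE t) ∘ (X i)) ω} := by
      ext ω; simp only [Set.mem_setOf_eq, countLE_eq_sum, Function.comp]
    rw [hset]; exact this
  · set Y' : ℕ → Ω → ℝ := fun i ω => 1 - indLE t (X i ω) with hY'
    have hY'meas : ∀ i, Measurable (Y' i) := fun i => (measurable_const.sub (hYmeas i))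
    have hY'indep : iIndepFun Y' P :=
      hindep.comp (fun _ => fun x => 1 - indLE t x) (fun _ => measurable_const.sub hgmeas)
    have hb' : ∀ (i : ℕ) (ω : Ω), Y' i ω = 0 ∨ Y' i ω = 1 := by
      intro i ω; rcases hb i ω with h | h <;> simp [hY', h]
    have hint' : ∀ i, ∫ ω, Y' i ω ∂P = 1 - F t := by
      intro i
      rw [hY']
      have : Integrable (fun ω => indLE t (X i ω)) P := by
        refine ⟨(hYmeas i).aestronglyMeasurable, ?_⟩
        apply MeasureTheory.HasFiniteIntegral.of_bounded (C := 1)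
        filter_upwards with ω
        rcases hb i ω with h | h <;> simp [h]
      rw [integral_sub (integrable_const 1) this, integral_const, hint1 i]
      simp
    have := chernoff_aux hY'meas hY'indep hb' hint' N hl0 hl2
    have hset : {ω | (countLE X N t ω : ℝ) ≤ (N : ℝ) * F t - N * lam}
        = {ω | (N : ℝ) * (1 - F t) + N * lam ≤ ∑ i ∈ Finset.Icc 1 N, Y' i ω} := by
      ext ω
      simp only [Set.mem_setOf_eq, hY']
      rw [Finset.sum_sub_distrib, Finset.sum_const, Nat.card_Icc, Nat.add_sub_cancel,
        nsmul_eq_mul, mul_one, ← countLE_eq_sum]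
      constructor <;> intro h <;> linarith
    rw [hset]; exact this

lemma F_quantile_eq {Ω : Type*} [MeasurableSpace Ω] {P : Measure Ω} [IsProbabilityMeasure P]
    {X1 : Ω → ℝ} (hX : Measurable X1) {F : ℝ → ℝ}
    (hF : ∀ x, F x = (P {ω | X1 ω ≤ x}).toReal) {a : ℝ} (ha : 0 < a) (ha1 : a < 1)
    (Fmono : Monotone F) (hcont : ContinuousAt F (quantile F a)) : F (quantile F a) = a := by
  set S := {x | a ≤ F x} with hS
  -- F tends to 1 at +∞ along ℕ
  have htop : Tendsto (fun n : ℕ => F n) atTop (nhds 1) := by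
    have hmono : Monotone fun n : ℕ => {ω | X1 ω ≤ (n : ℝ)} := by
      intro m n hmn ω hω
      simp only [mem_setOf_eq] at *
      exact le_trans hω (by exact_mod_cast hmn)
    have hunion : ⋃ n : ℕ, {ω | X1 ω ≤ (n : ℝ)} = univ := by
      ext ω; simp only [mem_iUnion, mem_setOf_eq, mem_univ, iff_true]
      obtain ⟨n, hn⟩ := exists_nat_gt (X1 ω)
      exact ⟨n, hn.le⟩
    have h1 : Tendsto (fun n : ℕ => P {ω | X1 ω ≤ (n : ℝ)}) atTop (nhds (P univ)) := by
      rw [← hunion]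
      exact tendsto_measure_iUnion_atTop hmono
    rw [measure_univ] at h1
    have h2 := (ENNReal.tendsto_toReal (by norm_num : (1 : ENNReal) ≠ ⊤)).comp h1
    rw [show ENNReal.toReal 1 = 1 from rfl] at h2
    have h3 : (fun n : ℕ => F (n : ℝ))
        = ENNReal.toReal ∘ fun n : ℕ => P {ω | X1 ω ≤ (n : ℝ)} :=
      funext fun n => by simp [Function.comp, hF]
    rw [h3]; exact h2
  have hbot : Tendsto (fun n : ℕ => F (-(n : ℝ))) atTop (nhds 0) := by
    have hanti : Antitone fun n : ℕ => {ω | X1 ω ≤ -(n : ℝ)} := by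
      intro m n hmn ω hω
      simp only [mem_setOf_eq] at *
      have : (m : ℝ) ≤ n := by exact_mod_cast hmn
      linarith
    have hinter : ⋂ n : ℕ, {ω | X1 ω ≤ -(n : ℝ)} = ∅ := by
      ext ω; simp only [mem_iInter, mem_setOf_eq, mem_empty_iff_false, iff_false]
      push_neg
      obtain ⟨n, hn⟩ := exists_nat_gt (-X1 ω)
      exact ⟨n, by linarith⟩
    have h1 : Tendsto (fun n : ℕ => P {ω | X1 ω ≤ -(n : ℝ)}) atTop (nhds (P (∅ : Set Ω))) := by
      rw [← hinter]
      refine tendsto_measure_iInter_atTop (fun n => (hX measurableSet_Iic).nullMeasurableSet) hanti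
        ⟨0, measure_ne_top _ _⟩
    rw [measure_empty] at h1
    have h2 := (ENNReal.tendsto_toReal (by norm_num : (0 : ENNReal) ≠ ⊤)).comp h1
    rw [show ENNReal.toReal 0 = 0 from rfl] at h2
    have h3 : (fun n : ℕ => F (-(n : ℝ)))
        = ENNReal.toReal ∘ fun n : ℕ => P {ω | X1 ω ≤ -(n : ℝ)} :=
      funext fun n => by simp [Function.comp, hF]
    rw [h3]; exact h2
  have hne : S.Nonempty := by
    have := htop.eventually_const_lt ha1
    obtain ⟨n, hn⟩ := this.exists
    exact ⟨n, hn.le⟩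
  have hbdd : BddBelow S := by
    have := hbot.eventually_lt_const ha
    obtain ⟨n, hn⟩ := this.exists
    refine ⟨-(n : ℝ), fun y hy => ?_⟩
    by_contra hy'
    push_neg at hy'
    exact absurd (le_trans hy (Fmono hy'.le)) (not_le.2 hn)
  set ξ := quantile F a with hξ
  have hξS : ξ = sInf S := rfl
  have hle : a ≤ F ξ := by
    have hseq : Tendsto (fun n : ℕ => F (ξ + 1 / (n + 1))) atTop (nhds (F ξ)) := by
      refine hcont.tendsto.comp ?_
      have : Tendsto (fun n : ℕ => ξ + 1 / ((n : ℝ) + 1)) atTop (nhds (ξ + 0)) :=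
        tendsto_const_nhds.add tendsto_one_div_add_atTop_nhds_zero_nat
      simpa using this
    refine ge_of_tendsto hseq (Filter.Eventually.of_forall fun n => ?_)
    have hpos : (0 : ℝ) < 1 / ((n : ℝ) + 1) := by positivity
    have : sInf S < ξ + 1 / ((n : ℝ) + 1) := by rw [← hξS]; linarith
    obtain ⟨y, hyS, hy⟩ := exists_lt_of_csInf_lt hne this
    exact le_trans hyS (Fmono hy.le)
  rcases eq_or_lt_of_le hle with h | h
  · exact h.symm
  · exfalso
    have hev : ∀ᶠ x in nhds ξ, a < F x := hcont.eventually (eventually_gt_nhds h)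
    obtain ⟨δ', hδ', hball⟩ := Metric.eventually_nhds_iff.1 hev
    have hmem : ξ - δ' / 2 ∈ S := by
      refine le_of_lt (hball ?_)
      rw [Real.dist_eq, show ξ - δ' / 2 - ξ = -(δ' / 2) by ring, abs_neg,
        abs_of_nonneg (by linarith)]
      linarith
    have := csInf_le hbdd hmem
    rw [← hξS] at this
    linarith

set_option maxHeartbeats 1000000 in
set_option maxHeartbeats 1000000 in
lemma grid_bound {Ω : Type*} (X : ℕ → Ω → ℝ) {N : ℕ} (hN : 4 ≤ N) {F : ℝ → ℝ}
    (Fmono : Monotone F) {ξ η L dd : ℝ} (hη : 0 < η) (hL : 0 ≤ L)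
    (hFLip : ∀ x y, ξ - η ≤ x → x ≤ y → y ≤ ξ + η → F y - F x ≤ L * (y - x)) (ω : Ω)
    (hE : ∀ j ∈ Finset.range (N + 1),
      |(countLE X N (ξ - η + j * (2 * η / N)) ω : ℝ) - N * F (ξ - η + j * (2 * η / N))| ≤ N * dd)
    {t : ℝ} (ht1 : ξ - η / 2 ≤ t) (ht2 : t ≤ ξ + η / 2) :
    |(countLE X N t ω : ℝ) - N * F t| ≤ N * dd + 2 * L * η := by
  have hN0 : (0 : ℝ) < N := by positivity
  have hN4 : (4 : ℝ) ≤ N := by exact_mod_cast hN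
  set s : ℝ := 2 * η / N with hs_def
  have hs0 : 0 < s := by positivity
  have hsη : s ≤ η / 2 := by
    rw [hs_def, div_le_iff₀ hN0]
    nlinarith
  set x : ℝ := (t - (ξ - η)) / s with hx_def
  have hx0 : 0 ≤ x := by
    apply div_nonneg _ hs0.le
    linarith
  have hNs : (N : ℝ) * s = 2 * η := by
    rw [hs_def]; field_simp
  have hxN : x ≤ (3 : ℝ) / 4 * N := by
    rw [hx_def, div_le_iff₀ hs0]
    nlinarith [hNs]
  have hxN' : x ≤ N := by linarith
  have key : ∀ j : ℕ, (j : ℝ) ≤ N → ξ - η + j * s ∈ Set.Icc (ξ - η) (ξ + η) ∧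
      j ∈ Finset.range (N + 1) := by
    intro j hj
    constructor
    · constructor
      · nlinarith [mul_nonneg (Nat.cast_nonneg j : (0:ℝ) ≤ j) hs0.le]
      · have h1 : (j : ℝ) * s ≤ N * s := mul_le_mul_of_nonneg_right hj hs0.le
        linarith [hNs]
    · rw [Finset.mem_range]
      have : (j : ℝ) ≤ (N : ℝ) := hj
      exact_mod_cast Nat.lt_succ_of_le (by exact_mod_cast this)

  rw [abs_le]
  constructor
  · -- lower bound : N F t - (N dd + 2 L η) ≤ count t
    set j : ℕ := ⌊x⌋₊ with hj_def
    have hjx : (j : ℝ) ≤ x := Nat.floor_le hx0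
    have hxj : x ≤ (j : ℝ) + 1 := le_of_lt (Nat.lt_floor_add_one x)
    obtain ⟨hmem, hrange⟩ := key j (le_trans hjx hxN')
    set tj : ℝ := ξ - η + j * s with htj_def
    have htjt : tj ≤ t := by
      have : (j : ℝ) * s ≤ x * s := mul_le_mul_of_nonneg_right hjx hs0.le
      rw [hx_def, div_mul_cancel₀ _ (ne_of_gt hs0)] at this
      rw [htj_def]; linarith
    have httj : t ≤ tj + s := by
      have : x * s ≤ ((j : ℝ) + 1) * s := mul_le_mul_of_nonneg_right hxj hs0.le
      rw [hx_def, div_mul_cancel₀ _ (ne_of_gt hs0)] at this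
      rw [htj_def]; nlinarith
    have hcount : (countLE X N tj ω : ℝ) ≤ countLE X N t ω := by
      exact_mod_cast countLE_mono X N htjt ω
    have hEj := hE j hrange
    rw [abs_le] at hEj
    have hFj : F t - F tj ≤ L * s := by
      have h1 := hFLip tj t hmem.1 htjt (by linarith)
      have h3 : t - tj ≤ s := by linarith
      have h4 := mul_le_mul_of_nonneg_left h3 hL
      linarith
    have hNLs : (N : ℝ) * (L * s) = 2 * L * η := by
      rw [show (N : ℝ) * (L * s) = L * ((N : ℝ) * s) by ring, hNs]; ring
    have : N * F t - N * F tj ≤ 2 * L * η := by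
      have h2 := mul_le_mul_of_nonneg_left hFj hN0.le
      rw [mul_sub] at h2
      linarith [hNLs]
    linarith [hEj.1]
  · -- upper bound : count t ≤ N F t + N dd + 2 L η
    set j : ℕ := ⌈x⌉₊ with hj_def
    have hjx : x ≤ (j : ℝ) := Nat.le_ceil x
    have hxj : (j : ℝ) ≤ x + 1 := le_of_lt (Nat.ceil_lt_add_one hx0)
    have hjN : (j : ℝ) ≤ N := by linarith
    obtain ⟨hmem, hrange⟩ := key j hjN
    set tj : ℝ := ξ - η + j * s with htj_def
    have httj : t ≤ tj := by
      have : x * s ≤ (j : ℝ) * s := mul_le_mul_of_nonneg_right hjx hs0.le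
      rw [hx_def, div_mul_cancel₀ _ (ne_of_gt hs0)] at this
      rw [htj_def]; linarith
    have htjt : tj ≤ t + s := by
      have : (j : ℝ) * s ≤ (x + 1) * s := mul_le_mul_of_nonneg_right hxj hs0.le
      rw [add_mul, hx_def, div_mul_cancel₀ _ (ne_of_gt hs0)] at this
      rw [htj_def]; nlinarith
    have hcount : (countLE X N t ω : ℝ) ≤ countLE X N tj ω := by
      exact_mod_cast countLE_mono X N httj ω
    have hEj := hE j hrange
    rw [abs_le] at hEj
    have hFj : F tj - F t ≤ L * s := by
      have h1 := hFLip t tj (by linarith) httj hmem.2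
      have h3 : tj - t ≤ s := by linarith
      have h4 := mul_le_mul_of_nonneg_left h3 hL
      linarith
    have hNLs : (N : ℝ) * (L * s) = 2 * L * η := by
      rw [show (N : ℝ) * (L * s) = L * ((N : ℝ) * s) by ring, hNs]; ring
    have : N * F tj - N * F t ≤ 2 * L * η := by
      have h2 := mul_le_mul_of_nonneg_left hFj hN0.le
      rw [mul_sub] at h2
      linarith [hNLs]
    linarith [hEj.2]

set_option maxHeartbeats 1000000 in
set_option maxHeartbeats 1000000 in
lemma deterministic_core {Ω : Type*} (X : ℕ → Ω → ℝ) (F f : ℝ → ℝ)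
    {a ε K L η ξ f₀ dd δ B : ℝ} {N : ℕ} (ω : Ω)
    (ha : 0 < a) (hFξ : F ξ = a) (hf₀ : f₀ = f ξ) (hε : 0 < ε) (hK1 : 1 ≤ K) (hfa : 0 < f₀)
    (hL : L = f₀ + K * ε) (hη0 : 0 < η) (hηε : η < ε)
    (hMVT : ∀ x y, ξ - ε < x → x < y → y < ξ + ε →
      ∃ z, z ∈ Set.Ioo x y ∧ F y - F x = f z * (y - x))
    (hfb : ∀ z, z ∈ Set.Ioo (ξ - ε) (ξ + ε) → f₀ - K * |z - ξ| ≤ f z ∧ f z ≤ f₀ + K * |z - ξ|)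
    (Fmono : Monotone F)
    (hFLip : ∀ x y, ξ - η ≤ x → x ≤ y → y ≤ ξ + η → F y - F x ≤ L * (y - x))
    (hFup : ∀ u, 0 < u → u ≤ η → a + f₀ / 2 * u ≤ F (ξ + u))
    (hFdn : ∀ u, 0 < u → u ≤ η → F (ξ - u) ≤ a - f₀ / 2 * u)
    (hB0 : 0 ≤ B) (hdd : dd = B * Real.sqrt (Real.log N / N))
    (hδdef : δ = (2 / f₀) * (dd + (2 * L * η + 2) / N))
    (hN4 : 4 ≤ N) (hkN : a * N + 1 ≤ (N : ℝ)) (hlog1 : 1 ≤ Real.log N)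
    (hΔη : δ + 1 / (2 * (N : ℝ) ^ ((1:ℝ)/4)) + 1 / N ≤ η / 2)
    (hE : ∀ j ∈ Finset.range (N + 1),
      |(countLE X N (ξ - η + j * (2 * η / N)) ω : ℝ) - N * F (ξ - η + j * (2 * η / N))| ≤ N * dd) :
    |fhatA a X N ω - f₀| ≤
      (2 * K * ((2 / f₀) * (B + 2 * L * η + 2) + 3 / 2) + f₀ + 2 * B + 4 * L * η + 1) *
        (Real.sqrt (Real.log N) * (((N : ℝ) ^ ((1:ℝ)/4))⁻¹)) := by
  have hN0 : (0 : ℝ) < N := by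
    have : (4:ℝ) ≤ N := by exact_mod_cast hN4
    linarith
  have hN1 : (1 : ℝ) ≤ N := by linarith [show (4:ℝ) ≤ N from by exact_mod_cast hN4]
  have hK0 : (0 : ℝ) < K := by linarith
  have hL0 : (0 : ℝ) < L := by
    rw [hL]; have := mul_pos hK0 hε; linarith
  set q : ℝ := (N : ℝ) ^ ((1:ℝ)/4) with hq_def
  have hq0 : 0 < q := Real.rpow_pos_of_pos hN0 _
  have hq1 : 1 ≤ q := Real.one_le_rpow hN1 (by norm_num)
  have hqN : q ≤ N := by
    calc q ≤ (N:ℝ) ^ (1:ℝ) := Real.rpow_le_rpow_of_exponent_le hN1 (by norm_num)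
    _ = N := Real.rpow_one _
  set m : ℝ := (N : ℝ) ^ (-(3/4 : ℝ)) with hm_def
  have hm0 : 0 < m := Real.rpow_pos_of_pos hN0 _
  have hm1 : m ≤ 1 := Real.rpow_le_one_of_one_le_of_nonpos hN1 (by norm_num)
  have hmq : m * (N : ℝ) = q := by
    rw [hm_def, hq_def, ← Real.rpow_add_one (ne_of_gt hN0)]
    norm_num
  have hm_qinv : m ≤ q⁻¹ := by
    rw [hm_def, hq_def, ← Real.rpow_neg hN0.le]
    exact Real.rpow_le_rpow_of_exponent_le hN1 (by norm_num)
  have hqdivN : q / N = m := by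
    rw [eq_comm, eq_div_iff (ne_of_gt hN0), hmq]
  set u : ℝ := Real.sqrt (Real.log N) * q⁻¹ with hu_def
  have hs1 : 1 ≤ Real.sqrt (Real.log N) := by
    rw [show (1:ℝ) = Real.sqrt 1 from (Real.sqrt_one).symm]
    exact Real.sqrt_le_sqrt hlog1
  have hu0 : 0 < u := by positivity
  have hqinv_u : q⁻¹ ≤ u := by
    calc q⁻¹ = 1 * q⁻¹ := (one_mul _).symm
    _ ≤ Real.sqrt (Real.log N) * q⁻¹ := by
        apply mul_le_mul_of_nonneg_right hs1 (inv_pos.2 hq0).le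
  have hm_u : m ≤ u := le_trans hm_qinv hqinv_u
  have hkey : q * Real.sqrt (Real.log N / N) = u := by
    have h2 : Real.sqrt (N:ℝ) = q * q := by
      rw [Real.sqrt_eq_rpow, hq_def, ← Real.rpow_add hN0]; norm_num
    rw [Real.sqrt_div (Real.log_nonneg hN1), h2, hu_def]
    field_simp
  have hqdd : q * dd = B * u := by rw [hdd, mul_comm B _, ← mul_assoc, hkey]; ring
  have hdd0 : 0 ≤ dd := by rw [hdd]; positivity
  have hdd_u : dd ≤ B * u := by
    have he : dd = (B * u) * q⁻¹ := by
      rw [← hqdd]; field_simp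
    rw [he]
    exact mul_le_of_le_one_right (by positivity) (inv_le_one_of_one_le₀ hq1)
  set hh : ℝ := 1 / (2 * q) with hh_def
  have hh0 : 0 < hh := by positivity
  set γ : ℝ := 1 / (N : ℝ) with hγ_def
  have hγ0 : 0 < γ := by positivity
  have hγ_qinv : γ ≤ q⁻¹ := by
    rw [hγ_def, one_div]
    exact inv_anti₀ hq0 hqN
  have hγ_u : γ ≤ u := le_trans hγ_qinv hqinv_u
  have hh_u : hh ≤ u := by
    have h1 : 1 / (2 * q) ≤ q⁻¹ := by
      rw [one_div]
      apply inv_anti₀ hq0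
      linarith
    rw [hh_def]
    linarith [hqinv_u]
  have hδ0 : 0 < δ := by
    rw [hδdef]
    have h1 : 0 < (2 * L * η + 2) / N := by positivity
    have h2 : 0 < 2 / f₀ := by positivity
    exact mul_pos h2 (by linarith)
  set Δ : ℝ := δ + hh + γ with hΔ_def
  have hΔ0 : 0 < Δ := by positivity
  have hΔη2 : Δ ≤ η / 2 := hΔη
  have hδη : δ ≤ η := by rw [hΔ_def] at hΔη2; linarith
  set D : ℝ := (2 / f₀) * (B + 2 * L * η + 2) + 3 / 2 with hD_def
  have hΔ_u : Δ ≤ D * u := by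
    have hδ_u : δ ≤ (2 / f₀) * (B + 2 * L * η + 2) * u := by
      rw [hδdef]
      have h1 : (2 * L * η + 2) / N = (2 * L * η + 2) * γ := by rw [hγ_def]; ring
      have h2 : (2 * L * η + 2) * γ ≤ (2 * L * η + 2) * u := by
        apply mul_le_mul_of_nonneg_left hγ_u
        have := mul_pos hL0 hη0
        linarith
      have h3 : dd + (2 * L * η + 2) / N ≤ B * u + (2 * L * η + 2) * u := by
        rw [h1]; linarith [hdd_u]
      have h4 : (0:ℝ) ≤ 2 / f₀ := by positivity
      calc (2 / f₀) * (dd + (2 * L * η + 2) / N) ≤ (2 / f₀) * (B * u + (2 * L * η + 2) * u) :=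
            mul_le_mul_of_nonneg_left h3 h4
      _ = (2 / f₀) * (B + 2 * L * η + 2) * u := by ring
    have hh_half : hh ≤ (1/2) * u := by
      have e : hh = (1/2) * q⁻¹ := by rw [hh_def, one_div, mul_inv]; ring
      rw [e]; linarith [hqinv_u]
    calc Δ = δ + hh + γ := hΔ_def
    _ ≤ (2 / f₀) * (B + 2 * L * η + 2) * u + (1/2) * u + u := by
        linarith [hδ_u, hh_half, hγ_u]
    _ = D * u := by rw [hD_def]; ring
  set k : ℕ := (⌊a * (N : ℝ)⌋).toNat + 1 with hk_def
  have hfl0 : (0:ℤ) ≤ ⌊a * (N : ℝ)⌋ := Int.floor_nonneg.2 (by positivity)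
  have hkr : (k : ℝ) = (⌊a * (N : ℝ)⌋ : ℝ) + 1 := by
    have h : ((⌊a * (N : ℝ)⌋.toNat : ℕ) : ℝ) = ((⌊a * (N : ℝ)⌋ : ℤ) : ℝ) := by
      norm_cast
      exact Int.toNat_of_nonneg hfl0
    rw [hk_def]
    push_cast
    rw [h]
  have hk_ub : (k : ℝ) ≤ a * N + 1 := by rw [hkr]; linarith [Int.floor_le (a * (N:ℝ))]
  have hk_lb : a * N < (k : ℝ) := by rw [hkr]; linarith [Int.lt_floor_add_one (a * (N:ℝ))]
  have hk1 : 1 ≤ k := by omega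
  have hkN' : k ≤ N := by
    have : (k : ℝ) ≤ N := le_trans hk_ub hkN
    exact_mod_cast this
  set R : ℝ := orderStat X N k ω with hR_def
  have hRiff : ∀ t : ℝ, R ≤ t ↔ k ≤ countLE X N t ω := fun t => orderStat_le_iff X hk1 hkN' ω t
  have hunif : ∀ t : ℝ, ξ - η / 2 ≤ t → t ≤ ξ + η / 2 →
      |(countLE X N t ω : ℝ) - N * F t| ≤ N * dd + 2 * L * η :=
    fun t h1 h2 => grid_bound X hN4 Fmono hη0 hL0.le hFLip ω hE h1 h2
  have hNδ : f₀ / 2 * δ * N = N * dd + 2 * L * η + 2 := by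
    rw [hδdef]
    field_simp
    ring
  have hRub : R ≤ ξ + δ := by
    rw [hRiff]
    have h1 := hunif (ξ + δ) (by linarith) (by linarith)
    rw [abs_le] at h1
    have h2 := hFup δ hδ0 hδη
    have h3 : (N : ℝ) * (a + f₀ / 2 * δ) ≤ N * F (ξ + δ) :=
      mul_le_mul_of_nonneg_left h2 hN0.le
    have h3' : (N : ℝ) * (a + f₀ / 2 * δ) = N * a + f₀ / 2 * δ * N := by ring
    have h4 : (k : ℝ) ≤ countLE X N (ξ + δ) ω := by
      have hna : 0 ≤ (N:ℝ) * a - a * N + 1 := by ring_nf; linarith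
      linarith [h1.1, h3, hNδ, hk_ub]
    exact_mod_cast h4
  have hRlb : ξ - δ < R := by
    by_contra hcon
    push_neg at hcon
    have h0 : k ≤ countLE X N (ξ - δ) ω := (hRiff _).1 hcon
    have h1 := hunif (ξ - δ) (by linarith) (by linarith)
    rw [abs_le] at h1
    have h2 := hFdn δ hδ0 hδη
    have h3 : (N : ℝ) * F (ξ - δ) ≤ N * (a - f₀ / 2 * δ) :=
      mul_le_mul_of_nonneg_left h2 hN0.le
    have h3' : (N : ℝ) * (a - f₀ / 2 * δ) = N * a - f₀ / 2 * δ * N := by ring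
    have h5 : (k : ℝ) ≤ (countLE X N (ξ - δ) ω : ℝ) := by exact_mod_cast h0
    have hna : (N:ℝ) * a = a * N := by ring
    linarith [h1.2, h3, hNδ, hk_lb]
  set p1 : ℝ := R + hh with hp1_def
  set p2 : ℝ := R - hh with hp2_def
  set p3 : ℝ := R - hh - γ with hp3_def
  have e1 : p1 = R + hh := hp1_def
  have e2 : p2 = R - hh := hp2_def
  have e3 : p3 = R - hh - γ := hp3_def
  have hΔe : Δ = δ + hh + γ := hΔ_def
  have hp1r : p1 ≤ ξ + η / 2 := by linarith [hRub]
  have hp3r : ξ - η / 2 ≤ p3 := by linarith [hRlb]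
  have hp2r : ξ - η / 2 ≤ p2 := by linarith [hRlb]
  set SS : ℝ := ∑ i ∈ Finset.Icc 1 N,
      if 2 * q * |X i ω - R| ≤ 1 then (1:ℝ) else 0 with hSS_def
  have hfhat : fhatA a X N ω = m * SS := rfl
  have hcond : ∀ z : ℝ, (2 * q * |z - R| ≤ 1) ↔ |z - R| ≤ hh := by
    intro z
    rw [hh_def, le_div_iff₀ (by positivity)]
    constructor <;> intro h <;> linarith [mul_comm (|z - R|) (2 * q)]
  have hSSub : SS ≤ (countLE X N p1 ω : ℝ) - countLE X N p3 ω := by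
    rw [hSS_def, countLE_eq_sum, countLE_eq_sum, ← Finset.sum_sub_distrib]
    apply Finset.sum_le_sum
    intro i _
    rw [show (if 2 * q * |X i ω - R| ≤ 1 then (1:ℝ) else 0)
      = if |X i ω - R| ≤ hh then (1:ℝ) else 0 from by rw [if_congr (hcond _) rfl rfl]]
    unfold indLE
    rcases le_or_gt (X i ω) p3 with h1 | h1
    · rw [if_pos (le_trans h1 (by linarith)), if_pos h1, if_neg]
      · norm_num
      · intro hcon
        rw [abs_le] at hcon
        linarith [hcon.1]
    · rcases le_or_gt (X i ω) p1 with h2 | h2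
      · rw [if_pos h2, if_neg (not_le.2 h1)]
        split_ifs <;> norm_num
      · rw [if_neg (not_le.2 h2), if_neg (not_le.2 (by linarith : p3 < X i ω)), if_neg]
        · norm_num
        · intro hcon
          rw [abs_le] at hcon
          linarith [hcon.2]
  have hSSlb : (countLE X N p1 ω : ℝ) - countLE X N p2 ω ≤ SS := by
    rw [hSS_def, countLE_eq_sum, countLE_eq_sum, ← Finset.sum_sub_distrib]
    apply Finset.sum_le_sum
    intro i _
    rw [show (if 2 * q * |X i ω - R| ≤ 1 then (1:ℝ) else 0)
      = if |X i ω - R| ≤ hh then (1:ℝ) else 0 from by rw [if_congr (hcond _) rfl rfl]]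
    unfold indLE
    rcases le_or_gt (X i ω) p2 with h1 | h1
    · rw [if_pos (le_trans h1 (by linarith)), if_pos h1]
      split_ifs <;> norm_num
    · rcases le_or_gt (X i ω) p1 with h2 | h2
      · rw [if_pos h2, if_neg (not_le.2 h1), if_pos]
        · norm_num
        · rw [abs_le]
          constructor <;> linarith
      · rw [if_neg (not_le.2 h2), if_neg (not_le.2 (by linarith : p2 < X i ω))]
        split_ifs <;> norm_num
  have hzbound : ∀ z, p3 < z → z < p1 → (f₀ - K * Δ ≤ f z ∧ f z ≤ f₀ + K * Δ) := by
    intro z hz1 hz2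
    have hz_mem : z ∈ Set.Ioo (ξ - ε) (ξ + ε) := by
      constructor
      · linarith [hp3r]
      · linarith [hp1r]
    have hzξ : |z - ξ| ≤ Δ := by
      rw [abs_le]
      constructor
      · linarith [hRlb]
      · linarith [hRub]
    obtain ⟨hb1, hb2⟩ := hfb z hz_mem
    have hKz : K * |z - ξ| ≤ K * Δ := mul_le_mul_of_nonneg_left hzξ hK0.le
    exact ⟨by linarith, by linarith⟩
  have hp3p1 : p3 < p1 := by linarith
  have hp2p1 : p2 < p1 := by linarith
  have hF13 : F p1 - F p3 ≤ (f₀ + K * Δ) * (2 * hh + γ) := by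
    obtain ⟨z, hz, heq⟩ := hMVT p3 p1 (by linarith [hp3r]) hp3p1 (by linarith [hp1r])
    have hp13 : p1 - p3 = 2 * hh + γ := by rw [e1, e3]; ring
    rw [heq, hp13]
    apply mul_le_mul_of_nonneg_right ((hzbound z hz.1 hz.2).2) (by positivity)
  have hF12 : (f₀ - K * Δ) * (2 * hh) ≤ F p1 - F p2 := by
    obtain ⟨z, hz, heq⟩ := hMVT p2 p1 (by linarith [hp2r]) hp2p1 (by linarith [hp1r])
    have hp12 : p1 - p2 = 2 * hh := by rw [e1, e2]; ring
    rw [heq, hp12]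
    apply mul_le_mul_of_nonneg_right ((hzbound z (by linarith [hz.1]) hz.2).1) (by positivity)
  have hu1 := hunif p1 (by linarith) hp1r
  have hu2 := hunif p2 hp2r (by linarith)
  have hu3 := hunif p3 hp3r (by linarith)
  rw [abs_le] at hu1 hu2 hu3
  have hq2hh : q * (2 * hh) = 1 := by rw [hh_def]; field_simp
  have hqγ : q * γ = m := by rw [hγ_def, ← hqdivN]; ring
  have h5 : q * (2 * hh + γ) = 1 + m := by
    calc q * (2 * hh + γ) = q * (2 * hh) + q * γ := by ring
    _ = 1 + m := by rw [hq2hh, hqγ]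
  have hup : fhatA a X N ω - f₀ ≤ K * Δ * (1 + m) + f₀ * m + 2 * (B * u) + 4 * L * η * m := by
    have h1 : SS ≤ (N : ℝ) * (F p1 - F p3) + 2 * (N * dd + 2 * L * η) := by
      linarith [hu1.2, hu3.1, hSSub]
    have h2 : m * SS ≤ m * ((N : ℝ) * (F p1 - F p3)) + m * (2 * (N * dd + 2 * L * η)) := by
      have := mul_le_mul_of_nonneg_left h1 hm0.le
      linarith [this]
    have h3 : m * ((N : ℝ) * (F p1 - F p3)) = q * (F p1 - F p3) := by
      rw [← hmq]; ring
    have h6 : m * (2 * ((N:ℝ) * dd + 2 * L * η)) = 2 * (q * dd) + 4 * L * η * m := by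
      rw [← hmq]; ring
    have h4 : q * (F p1 - F p3) ≤ (f₀ + K * Δ) * (1 + m) := by
      calc q * (F p1 - F p3) ≤ q * ((f₀ + K * Δ) * (2 * hh + γ)) :=
            mul_le_mul_of_nonneg_left hF13 hq0.le
      _ = (f₀ + K * Δ) * (q * (2 * hh + γ)) := by ring
      _ = (f₀ + K * Δ) * (1 + m) := by rw [h5]
    have he : (f₀ + K * Δ) * (1 + m) = K * Δ * (1 + m) + f₀ * m + f₀ := by ring
    rw [hfhat]
    rw [h3, h6, hqdd] at h2
    linarith [h2, h4]
  have hdn : f₀ - fhatA a X N ω ≤ K * Δ + 2 * (B * u) + 4 * L * η * m := by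
    have h1 : (N : ℝ) * (F p1 - F p2) - 2 * (N * dd + 2 * L * η) ≤ SS := by
      linarith [hu1.1, hu2.2, hSSlb]
    have h2 : m * ((N : ℝ) * (F p1 - F p2)) - m * (2 * (N * dd + 2 * L * η)) ≤ m * SS := by
      have := mul_le_mul_of_nonneg_left h1 hm0.le
      linarith [this]
    have h3 : m * ((N : ℝ) * (F p1 - F p2)) = q * (F p1 - F p2) := by
      rw [← hmq]; ring
    have h6 : m * (2 * ((N:ℝ) * dd + 2 * L * η)) = 2 * (q * dd) + 4 * L * η * m := by
      rw [← hmq]; ring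
    have h4 : (f₀ - K * Δ) ≤ q * (F p1 - F p2) := by
      calc (f₀ - K * Δ) = (f₀ - K * Δ) * (q * (2 * hh)) := by rw [hq2hh]; ring
      _ = q * ((f₀ - K * Δ) * (2 * hh)) := by ring
      _ ≤ q * (F p1 - F p2) := mul_le_mul_of_nonneg_left hF12 hq0.le
    rw [hfhat]
    rw [h3, h6, hqdd] at h2
    linarith [h2, h4]
  have hKΔ0 : (0:ℝ) ≤ K * Δ := by positivity
  have hf₀u : (0:ℝ) ≤ f₀ * u := by positivity
  have hm_u' : 4 * L * η * m ≤ 4 * L * η * u :=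
    mul_le_mul_of_nonneg_left hm_u (by positivity)
  have hf₀m : f₀ * m ≤ f₀ * u := mul_le_mul_of_nonneg_left hm_u hfa.le
  have hKΔ2 : K * Δ * (1 + m) ≤ K * Δ * 2 :=
    mul_le_mul_of_nonneg_left (by linarith) hKΔ0
  have habs : |fhatA a X N ω - f₀| ≤ K * Δ * 2 + f₀ * u + 2 * B * u + 4 * L * η * u := by
    rw [abs_le]
    constructor
    · have h7 : 2 * (B * u) = 2 * B * u := by ring
      linarith [hdn, hm_u', hKΔ0, hf₀u]
    · have h7 : 2 * (B * u) = 2 * B * u := by ring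
      linarith [hup, hm_u', hf₀m, hKΔ2]
  have hKΔu : K * Δ * 2 ≤ 2 * K * D * u := by
    calc K * Δ * 2 = (2 * K) * Δ := by ring
    _ ≤ (2 * K) * (D * u) := mul_le_mul_of_nonneg_left hΔ_u (by positivity)
    _ = 2 * K * D * u := by ring
  calc |fhatA a X N ω - f₀| ≤ K * Δ * 2 + f₀ * u + 2 * B * u + 4 * L * η * u := habs
  _ ≤ 2 * K * D * u + f₀ * u + 2 * B * u + 4 * L * η * u := by linarith [hKΔu]
  _ ≤ (2 * K * D + f₀ + 2 * B + 4 * L * η + 1) * u := by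
      have : (2 * K * D + f₀ + 2 * B + 4 * L * η + 1) * u
          = 2 * K * D * u + f₀ * u + 2 * B * u + 4 * L * η * u + u := by ring
      linarith [hu0]
  _ = _ := by rw [hD_def, hu_def]

set_option maxHeartbeats 1000000 in
/-- Lemma 6.1: rate of convergence of the kernel density estimator at the quantile. -/
theorem kernel_density_estimator_rate
    {Ω : Type*} [MeasurableSpace Ω] (P : Measure Ω) [IsProbabilityMeasure P]
    (X : ℕ → Ω → ℝ) (F f : ℝ → ℝ) (a : ℝ) (ha : 0 < a) (ha1 : a < 1)
    (hmeas : ∀ i, Measurable (X i))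
    (hindep : iIndepFun X P)
    (hident : ∀ i, IdentDistrib (X i) (X 1) P P)
    (hF : ∀ x, F x = (P {ω | X 1 ω ≤ x}).toReal)
    (hsmooth : ∃ ε > 0, ∃ K : NNReal,
      (∀ x ∈ Set.Ioo (quantile F a - ε) (quantile F a + ε), HasDerivAt F (f x) x) ∧
      LipschitzOnWith K f (Set.Ioo (quantile F a - ε) (quantile F a + ε)))
    (hfa : 0 < f (quantile F a)) :
    ∀ c > (0 : ℝ), ∃ A > (0 : ℝ),
      (fun N : ℕ => (P {ω | A * Real.log N ^ ((1:ℝ)/2) / (N : ℝ) ^ ((1:ℝ)/4) <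
          |fhatA a X N ω - f (quantile F a)|}).toReal)
        =O[atTop] (fun N : ℕ => (N : ℝ) ^ (-c)) := by
  intro c hc
  obtain ⟨ε, hε, K', hderiv, hlip⟩ := hsmooth
  set ξ : ℝ := quantile F a with hξdef
  set f₀ : ℝ := f ξ with hf₀def
  set K : ℝ := max (K' : ℝ) 1 with hKdef
  have hK1 : (1:ℝ) ≤ K := le_max_right _ _
  have hK0 : (0:ℝ) < K := lt_of_lt_of_le one_pos hK1
  have hKlip : ∀ x ∈ Set.Ioo (ξ - ε) (ξ + ε), ∀ y ∈ Set.Ioo (ξ - ε) (ξ + ε),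
      |f x - f y| ≤ K * |x - y| := by
    intro x hx y hy
    have h1 := hlip.dist_le_mul x hx y hy
    rw [Real.dist_eq, Real.dist_eq] at h1
    calc |f x - f y| ≤ (K' : ℝ) * |x - y| := h1
    _ ≤ K * |x - y| := mul_le_mul_of_nonneg_right (le_max_left _ _) (abs_nonneg _)
  have Fmono : Monotone F := by
    intro x y hxy
    rw [hF, hF]
    exact ENNReal.toReal_mono (measure_ne_top _ _)
      (measure_mono fun ω hω => le_trans hω hxy)
  have hξmem : ξ ∈ Set.Ioo (ξ - ε) (ξ + ε) := ⟨by linarith, by linarith⟩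
  have hcont : ContinuousAt F ξ := (hderiv ξ hξmem).continuousAt
  have hFξ : F ξ = a := F_quantile_eq (hmeas 1) hF ha ha1 Fmono hcont
  have hMVT : ∀ x y, ξ - ε < x → x < y → y < ξ + ε →
      ∃ z, z ∈ Set.Ioo x y ∧ F y - F x = f z * (y - x) := by
    intro x y hx hxy hy
    have hcont' : ContinuousOn F (Set.Icc x y) := by
      intro z hz
      exact ((hderiv z ⟨by linarith [hz.1], by linarith [hz.2]⟩).continuousAt).continuousWithinAt
    have hderiv' : ∀ z ∈ Set.Ioo x y, HasDerivAt F (f z) z := fun z hz =>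
      hderiv z ⟨by linarith [hz.1], by linarith [hz.2]⟩
    obtain ⟨z, hz, heq⟩ := exists_hasDerivAt_eq_slope F f hxy hcont' hderiv'
    refine ⟨z, hz, ?_⟩
    rw [heq]
    field_simp
    rw [mul_div_assoc, div_self (ne_of_gt (by linarith : (0:ℝ) < y - x)), mul_one]
  have hfb : ∀ z, z ∈ Set.Ioo (ξ - ε) (ξ + ε) →
      f₀ - K * |z - ξ| ≤ f z ∧ f z ≤ f₀ + K * |z - ξ| := by
    intro z hz
    have h1 := hKlip z hz ξ hξmem
    rw [abs_sub_le_iff] at h1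
    exact ⟨by linarith [h1.2], by linarith [h1.1]⟩
  set L : ℝ := f₀ + K * ε with hLdef
  have hL0 : (0:ℝ) < L := by
    have := mul_pos hK0 hε
    rw [hLdef]; linarith
  set η : ℝ := min (ε / 2) (f₀ / (2 * K)) with hηdef
  have hη0 : 0 < η := lt_min (by linarith) (by positivity)
  have hηε : η < ε := lt_of_le_of_lt (min_le_left _ _) (by linarith)
  have hηK : K * η ≤ f₀ / 2 := by
    have h1 : η ≤ f₀ / (2 * K) := min_le_right _ _
    have h2 : K * η ≤ K * (f₀ / (2 * K)) := mul_le_mul_of_nonneg_left h1 hK0.le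
    have h3 : K * (f₀ / (2 * K)) = f₀ / 2 := by field_simp
    linarith
  have hfbound : ∀ z, z ∈ Set.Ioo (ξ - ε) (ξ + ε) → f z ≤ L := by
    intro z hz
    have h1 := (hfb z hz).2
    have h2 : |z - ξ| ≤ ε := by
      rw [abs_le]; constructor <;> [linarith [hz.1]; linarith [hz.2]]
    have := mul_le_mul_of_nonneg_left h2 hK0.le
    rw [hLdef]; linarith
  have hFLip : ∀ x y, ξ - η ≤ x → x ≤ y → y ≤ ξ + η → F y - F x ≤ L * (y - x) := by
    intro x y hx hxy hy
    rcases eq_or_lt_of_le hxy with rfl | hxy'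
    · simp
    · obtain ⟨z, hz, heq⟩ := hMVT x y (by linarith) hxy' (by linarith)
      rw [heq]
      have hzmem : z ∈ Set.Ioo (ξ - ε) (ξ + ε) := ⟨by linarith [hz.1], by linarith [hz.2]⟩
      exact mul_le_mul_of_nonneg_right (hfbound z hzmem) (by linarith)
  have hFup : ∀ u, 0 < u → u ≤ η → a + f₀ / 2 * u ≤ F (ξ + u) := by
    intro v hv0 hvη
    obtain ⟨z, hz, heq⟩ := hMVT ξ (ξ + v) (by linarith) (by linarith) (by linarith)
    have hzmem : z ∈ Set.Ioo (ξ - ε) (ξ + ε) := ⟨by linarith [hz.1], by linarith [hz.2]⟩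
    have h1 := (hfb z hzmem).1
    have h2 : |z - ξ| ≤ η := by
      rw [abs_le]; constructor <;> [linarith [hz.1]; linarith [hz.2]]
    have h3 : K * |z - ξ| ≤ f₀ / 2 := le_trans (mul_le_mul_of_nonneg_left h2 hK0.le) hηK
    have h4 : f₀ / 2 ≤ f z := by linarith
    have h5 : f₀ / 2 * v ≤ f z * v := mul_le_mul_of_nonneg_right h4 hv0.le
    have h6 : F (ξ + v) - F ξ = f z * (ξ + v - ξ) := heq
    rw [hFξ] at h6
    have : ξ + v - ξ = v := by ring
    rw [this] at h6
    linarith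
  have hFdn : ∀ u, 0 < u → u ≤ η → F (ξ - u) ≤ a - f₀ / 2 * u := by
    intro v hv0 hvη
    obtain ⟨z, hz, heq⟩ := hMVT (ξ - v) ξ (by linarith) (by linarith) (by linarith)
    have hzmem : z ∈ Set.Ioo (ξ - ε) (ξ + ε) := ⟨by linarith [hz.1], by linarith [hz.2]⟩
    have h1 := (hfb z hzmem).1
    have h2 : |z - ξ| ≤ η := by
      rw [abs_le]; constructor <;> [linarith [hz.1]; linarith [hz.2]]
    have h3 : K * |z - ξ| ≤ f₀ / 2 := le_trans (mul_le_mul_of_nonneg_left h2 hK0.le) hηK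
    have h4 : f₀ / 2 ≤ f z := by linarith
    have h5 : f₀ / 2 * v ≤ f z * v := mul_le_mul_of_nonneg_right h4 hv0.le
    have h6 : F ξ - F (ξ - v) = f z * (ξ - (ξ - v)) := heq
    rw [hFξ] at h6
    have : ξ - (ξ - v) = v := by ring
    rw [this] at h6
    linarith
  -- constants
  set B : ℝ := Real.sqrt (4 * (c + 2)) with hBdef
  have hB2 : B ^ 2 = 4 * (c + 2) := Real.sq_sqrt (by linarith)
  have hB0 : 0 < B := Real.sqrt_pos.2 (by linarith)
  set d : ℕ → ℝ := fun N => B * Real.sqrt (Real.log N / N) with hddef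
  set δf : ℕ → ℝ := fun N => (2 / f₀) * (d N + (2 * L * η + 2) / N) with hδfdef
  set A : ℝ := 2 * K * ((2 / f₀) * (B + 2 * L * η + 2) + 3 / 2) + f₀ + 2 * B + 4 * L * η + 2
    with hAdef
  have hA0 : 0 < A := by
    have hf0 : (0:ℝ) < f₀ := hfa
    have h1 : (0:ℝ) < 2 / f₀ := div_pos two_pos hf0
    have hLη : (0:ℝ) < L * η := mul_pos hL0 hη0
    have h2 : (0:ℝ) < B + 2 * L * η + 2 := by nlinarith
    have h3 : (0:ℝ) < 2 / f₀ * (B + 2 * L * η + 2) + 3 / 2 := by nlinarith [mul_pos h1 h2]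
    have h4 : (0:ℝ) < 2 * K * (2 / f₀ * (B + 2 * L * η + 2) + 3 / 2) := by
      have := mul_pos hK0 h3; nlinarith
    rw [hAdef]; nlinarith [hB0, hf0, hLη, h4]
  refine ⟨A, hA0, ?_⟩
  -- events
  set E : ℕ → Set Ω := fun N => {ω | ∀ j ∈ Finset.range (N + 1),
    |(countLE X N (ξ - η + j * (2 * η / N)) ω : ℝ) - N * F (ξ - η + j * (2 * η / N))| ≤ N * d N}
    with hEdef
  -- probability bound
  have hprob : ∀ N : ℕ, 1 ≤ N → d N ≤ 2 →
      (P (E N)ᶜ).toReal ≤ 2 * (N + 1) * (N : ℝ) ^ (-(c + 2)) := by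
    intro N hN1 hd2
    have hN0 : (0:ℝ) < N := by exact_mod_cast hN1
    have hd0 : 0 ≤ d N := by rw [hddef]; positivity
    set tg : ℕ → ℝ := fun j => ξ - η + j * (2 * η / N) with htgdef
    set Up : ℕ → Set Ω := fun j =>
      {ω | (N : ℝ) * F (tg j) + N * d N ≤ (countLE X N (tg j) ω : ℝ)} with hUpdef
    set Dn : ℕ → Set Ω := fun j =>
      {ω | (countLE X N (tg j) ω : ℝ) ≤ (N : ℝ) * F (tg j) - N * d N} with hDndef
    have hsub : (E N)ᶜ ⊆ ⋃ j ∈ Finset.range (N + 1), (Up j ∪ Dn j) := by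
      intro ω hω
      simp only [hEdef, Set.mem_compl_iff, Set.mem_setOf_eq, not_forall] at hω
      obtain ⟨j, hj, hωj⟩ := hω
      rw [Set.mem_iUnion₂]
      refine ⟨j, hj, ?_⟩
      rw [not_le, lt_abs] at hωj
      rcases hωj with h | h
      · left; rw [hUpdef]; simp only [Set.mem_setOf_eq]; linarith
      · right; rw [hDndef]; simp only [Set.mem_setOf_eq]; linarith
    have hmeasure : P (E N)ᶜ ≤ ∑ j ∈ Finset.range (N + 1), (P (Up j) + P (Dn j)) := by
      calc P (E N)ᶜ ≤ P (⋃ j ∈ Finset.range (N + 1), (Up j ∪ Dn j)) := measure_mono hsub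
      _ ≤ ∑ j ∈ Finset.range (N + 1), P (Up j ∪ Dn j) := measure_biUnion_finset_le _ _
      _ ≤ ∑ j ∈ Finset.range (N + 1), (P (Up j) + P (Dn j)) :=
          Finset.sum_le_sum fun j _ => measure_union_le _ _
    have hexp : Real.exp (-(N : ℝ) * d N ^ 2 / 4) = (N : ℝ) ^ (-(c + 2)) := by
      have hlogN : (0:ℝ) ≤ Real.log N / N :=
        div_nonneg (Real.log_nonneg (by exact_mod_cast hN1)) hN0.le
      have h1 : d N ^ 2 = B ^ 2 * (Real.log N / N) := by
        rw [hddef, mul_pow, Real.sq_sqrt hlogN]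
      have h2 : (N:ℝ) * d N ^ 2 = 4 * (c + 2) * Real.log N := by
        rw [h1, hB2]
        field_simp
        try ring
      have h3 : -(N : ℝ) * d N ^ 2 / 4 = Real.log N * (-(c+2)) := by
        rw [show -(N : ℝ) * d N ^ 2 / 4 = -((N:ℝ) * d N ^ 2) / 4 by ring, h2]; ring
      rw [h3, Real.rpow_def_of_pos hN0]
    have htails : ∀ j, (P (Up j)).toReal + (P (Dn j)).toReal ≤ 2 * (N : ℝ) ^ (-(c + 2)) := by
      intro j
      obtain ⟨h1, h2⟩ := tail_bound hmeas hindep hident hF (tg j) N hd0 hd2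
      rw [hexp] at h1 h2
      rw [hUpdef, hDndef]
      linarith
    have hfin : ∀ j ∈ Finset.range (N+1), P (Up j) + P (Dn j) ≠ ⊤ := by
      intro j _
      exact ENNReal.add_ne_top.2 ⟨measure_ne_top _ _, measure_ne_top _ _⟩
    calc (P (E N)ᶜ).toReal ≤ (∑ j ∈ Finset.range (N + 1), (P (Up j) + P (Dn j))).toReal := by
          apply ENNReal.toReal_mono _ hmeasure
          exact (ENNReal.sum_lt_top.2 fun j hj => lt_top_iff_ne_top.2 (hfin j hj)).ne
    _ = ∑ j ∈ Finset.range (N + 1), ((P (Up j)).toReal + (P (Dn j)).toReal) := by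
        rw [ENNReal.toReal_sum hfin]
        exact Finset.sum_congr rfl fun j _ =>
          ENNReal.toReal_add (measure_ne_top _ _) (measure_ne_top _ _)
    _ ≤ ∑ _j ∈ Finset.range (N + 1), 2 * (N : ℝ) ^ (-(c + 2)) :=
        Finset.sum_le_sum fun j _ => htails j
    _ = 2 * (N + 1) * (N : ℝ) ^ (-(c + 2)) := by
        rw [Finset.sum_const, Finset.card_range]
        push_cast
        ring
  -- eventual conditions
  have hlogdiv : Tendsto (fun N : ℕ => Real.log N / N) atTop (nhds 0) :=
    (Real.isLittleO_log_id_atTop.tendsto_div_nhds_zero).comp tendsto_natCast_atTop_atTop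
  have hdlim : Tendsto d atTop (nhds 0) := by
    have h1 : Tendsto (fun N : ℕ => Real.sqrt (Real.log N / N)) atTop (nhds 0) := by
      have h := (Real.continuous_sqrt.tendsto 0).comp hlogdiv
      rw [Real.sqrt_zero] at h
      exact h
    have h2 := h1.const_mul B
    rw [mul_zero] at h2
    exact h2
  have hqlim : Tendsto (fun N : ℕ => 1 / (2 * (N : ℝ) ^ ((1:ℝ)/4))) atTop (nhds 0) := by
    apply Tendsto.comp tendsto_inv_atTop_zero ?_ |>.congr (fun N => by rw [Function.comp, one_div])
    apply Tendsto.const_mul_atTop two_pos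
    exact (tendsto_rpow_atTop (by norm_num)).comp tendsto_natCast_atTop_atTop
  have hNinvlim : Tendsto (fun N : ℕ => 1 / (N : ℝ)) atTop (nhds 0) :=
    tendsto_one_div_atTop_nhds_zero_nat
  have hδflim : Tendsto (fun N : ℕ => δf N + 1 / (2 * (N : ℝ) ^ ((1:ℝ)/4)) + 1 / N)
      atTop (nhds 0) := by
    have h1 : Tendsto (fun N : ℕ => (2 * L * η + 2) / (N : ℝ)) atTop (nhds 0) := by
      have h := hNinvlim.const_mul (2 * L * η + 2)
      rw [mul_zero] at h
      refine h.congr fun N => ?_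
      rw [mul_one_div]
    have h2 : Tendsto δf atTop (nhds 0) := by
      have := (hdlim.add h1).const_mul (2 / f₀)
      simpa [hδfdef] using this
    have := (h2.add hqlim).add hNinvlim
    simpa using this
  have hev1 : ∀ᶠ N : ℕ in atTop, 4 ≤ N := eventually_ge_atTop 4
  have hev2 : ∀ᶠ N : ℕ in atTop, a * N + 1 ≤ (N : ℝ) := by
    have h1 : Tendsto (fun N : ℕ => (1 - a) * (N : ℝ)) atTop atTop :=
      Tendsto.const_mul_atTop (by linarith) tendsto_natCast_atTop_atTop
    filter_upwards [h1.eventually_ge_atTop 1] with N hN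
    nlinarith
  have hev3 : ∀ᶠ N : ℕ in atTop, 1 ≤ Real.log N := by
    have h1 : Tendsto (fun N : ℕ => (N : ℝ)) atTop atTop := tendsto_natCast_atTop_atTop
    filter_upwards [h1.eventually_ge_atTop (Real.exp 1), eventually_ge_atTop 1] with N hN hN1
    have hN0 : (0:ℝ) < N := by exact_mod_cast hN1
    rwa [Real.le_log_iff_exp_le hN0]
  have hev4 : ∀ᶠ N : ℕ in atTop, d N ≤ 2 := by
    filter_upwards [hdlim.eventually_lt_const two_pos] with N hN using hN.le
  have hev5 : ∀ᶠ N : ℕ in atTop,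
      δf N + 1 / (2 * (N : ℝ) ^ ((1:ℝ)/4)) + 1 / N ≤ η / 2 := by
    filter_upwards [hδflim.eventually_lt_const (by positivity : (0:ℝ) < η / 2)] with N hN
      using hN.le
  -- conclusion
  rw [Asymptotics.isBigO_iff]
  refine ⟨4, ?_⟩
  filter_upwards [hev1, hev2, hev3, hev4, hev5] with N hN4 hNa hNlog hNd hNδ
  have hN1 : 1 ≤ N := by omega
  have hN0 : (0:ℝ) < N := by exact_mod_cast Nat.lt_of_lt_of_le Nat.zero_lt_one hN1
  have hN1' : (1:ℝ) ≤ N := by exact_mod_cast hN1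
  -- inclusion
  have hincl : {ω | A * Real.log N ^ ((1:ℝ)/2) / (N : ℝ) ^ ((1:ℝ)/4) <
      |fhatA a X N ω - f₀|} ⊆ (E N)ᶜ := by
    intro ω hω
    rw [Set.mem_compl_iff]
    intro hE'
    have hdet := deterministic_core X F f ω ha hFξ hf₀def hε hK1 hfa hLdef hη0 hηε hMVT hfb
      Fmono hFLip hFup hFdn hB0.le rfl rfl hN4 hNa hNlog hNδ hE'
    rw [Set.mem_setOf_eq] at hω
    have hAu : A * Real.log N ^ ((1:ℝ)/2) / (N : ℝ) ^ ((1:ℝ)/4)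
        = A * (Real.sqrt (Real.log N) * (((N : ℝ) ^ ((1:ℝ)/4))⁻¹)) := by
      rw [Real.sqrt_eq_rpow]
      ring
    have hu0 : 0 < Real.sqrt (Real.log N) * (((N : ℝ) ^ ((1:ℝ)/4))⁻¹) := by
      have h1 : 0 < Real.sqrt (Real.log N) := Real.sqrt_pos.2 (by linarith)
      have h2 : 0 < (N : ℝ) ^ ((1:ℝ)/4) := Real.rpow_pos_of_pos hN0 _
      positivity
    have hlt : (2 * K * ((2 / f₀) * (B + 2 * L * η + 2) + 3 / 2) + f₀ + 2 * B + 4 * L * η + 1) *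
        (Real.sqrt (Real.log N) * (((N : ℝ) ^ ((1:ℝ)/4))⁻¹)) <
        A * (Real.sqrt (Real.log N) * (((N : ℝ) ^ ((1:ℝ)/4))⁻¹)) := by
      apply mul_lt_mul_of_pos_right _ hu0
      rw [hAdef]; linarith [hB0, hfa]
    rw [hAu] at hω
    linarith [hdet, hω]
  have hP : (P {ω | A * Real.log N ^ ((1:ℝ)/2) / (N : ℝ) ^ ((1:ℝ)/4) <
      |fhatA a X N ω - f₀|}).toReal ≤ (P (E N)ᶜ).toReal :=
    ENNReal.toReal_mono (measure_ne_top _ _) (measure_mono hincl)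
  rw [Real.norm_eq_abs, abs_of_nonneg ENNReal.toReal_nonneg, Real.norm_eq_abs,
    abs_of_nonneg (Real.rpow_nonneg hN0.le _)]
  calc (P {ω | A * Real.log N ^ ((1:ℝ)/2) / (N : ℝ) ^ ((1:ℝ)/4) <
      |fhatA a X N ω - f₀|}).toReal ≤ (P (E N)ᶜ).toReal := hP
  _ ≤ 2 * (N + 1) * (N : ℝ) ^ (-(c + 2)) := hprob N hN1 hNd
  _ ≤ 4 * (N : ℝ) * (N : ℝ) ^ (-(c + 2)) := by
      apply mul_le_mul_of_nonneg_right _ (Real.rpow_nonneg hN0.le _)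
      push_cast; linarith
  _ = 4 * (N : ℝ) ^ (-(c + 1)) := by
      rw [mul_assoc]
      congr 1
      rw [show (-(c+1)) = 1 + (-(c+2)) by ring, Real.rpow_add hN0, Real.rpow_one]
  _ ≤ 4 * (N : ℝ) ^ (-c) := by
      apply mul_le_mul_of_nonneg_left _ (by norm_num)
      exact Real.rpow_le_rpow_of_exponent_le hN1' (by linarith)

end
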